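/- Let P be a probability measure on ℝ^D with a density π : ℝ^D → (0, ∞) with respect to Lebesgue measure such that log π is differentiable with ∇log π Lipschitz with constant M > 0. Then for every σ > 0, every y ∈ ℝ^D and every unit vector u ∈ ℝ^D, the directional variance of the Gaussian posterior satisfies Var_{ρ_{P,σ,y}}(⟨u,·⟩) ≥ σ²/(1 + Mσ²); equivalently, Var(X | X + σξ = y) ≽ (σ²/(1 + Mσ²)) I_D for (X, ξ) ∼ P ⊗ N(0, I_D). -/

import Mathlib

open MeasureTheory
open scoped RealInnerProductSpace ENNReal

/-- The Gaussian weight `exp(−‖y − x‖²/(2σ²))` defining the Gaussian posterior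
`ρ_{P,σ,y}(dx) ∝ exp(−‖y − x‖²/(2σ²)) P(dx)`. -/
noncomputable def gaussWeight {D : ℕ} (σ : ℝ) (y x : EuclideanSpace ℝ (Fin D)) : ℝ :=
  Real.exp (-‖y - x‖ ^ 2 / (2 * σ ^ 2))

/-- The directional variance `Var_{ρ_{P,σ,y}}(⟨u,·⟩) = ∫⟨u,x⟫² dρ − (∫⟨u,x⟫ dρ)²` of the
Gaussian posterior `ρ_{P,σ,y}`, written via normalized weighted integrals against `P`. -/
noncomputable def dirVar {D : ℕ} (P : Measure (EuclideanSpace ℝ (Fin D))) (σ : ℝ)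
    (y u : EuclideanSpace ℝ (Fin D)) : ℝ :=
  (∫ x, gaussWeight σ y x * ⟪u, x⟫ ^ 2 ∂P) / (∫ x, gaussWeight σ y x ∂P) -
    ((∫ x, gaussWeight σ y x * ⟪u, x⟫ ∂P) / (∫ x, gaussWeight σ y x ∂P)) ^ 2

set_option maxHeartbeats 1000000

open Filter Metric
open scoped Topology NNReal

section PosteriorVarAux

variable {D : ℕ}

/-- master integrability -/
lemma integrable_exp_lin_sub_sq (c ε : ℝ) (hε : 0 < ε) :
    Integrable (fun x : EuclideanSpace ℝ (Fin D) => Real.exp (c * ‖x‖ - ε * ‖x‖ ^ 2)) := by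
  have hbase : Integrable (fun x : EuclideanSpace ℝ (Fin D) => Real.exp (-(ε/2) * ‖x‖ ^ 2)) := by
    have h := (GaussianFourier.integrable_cexp_neg_mul_sq_norm_add
      (V := EuclideanSpace ℝ (Fin D)) (b := ((ε/2 : ℝ) : ℂ)) (by simpa using half_pos hε) 0 0).re
    refine h.congr (Filter.Eventually.of_forall fun x => ?_)
    simp only [inner_zero_left, mul_zero, add_zero, ← Complex.ofReal_pow, ← Complex.ofReal_neg,
      ← Complex.ofReal_mul, zero_mul]
    exact Complex.exp_ofReal_re _
  refine (hbase.const_mul (Real.exp (c ^ 2 / (2 * ε)))).mono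
    (Continuous.aestronglyMeasurable (by continuity)) (Filter.Eventually.of_forall fun x => ?_)
  rw [Real.norm_eq_abs, abs_of_nonneg (Real.exp_nonneg _), ← Real.exp_add,
    Real.norm_eq_abs, abs_of_nonneg (Real.exp_nonneg _), Real.exp_le_exp]
  have h1 : 0 ≤ (ε * ‖x‖ - c)^2 / (2*ε) := by positivity
  have h2 : (ε * ‖x‖ - c)^2 / (2*ε) = (ε/2) * ‖x‖^2 - c * ‖x‖ + c^2/(2*ε) := by
    field_simp; ring
  linarith


/-- growth bound on the density -/
lemma growth_bound (π : EuclideanSpace ℝ (Fin D) → ℝ) (M : ℝ) (hM : 0 < M)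
    (hπpos : ∀ x, 0 < π x)
    (hdiff : Differentiable ℝ (fun x : EuclideanSpace ℝ (Fin D) => Real.log (π x)))
    (hlip : LipschitzWith (Real.toNNReal M)
      (gradient (fun x : EuclideanSpace ℝ (Fin D) => Real.log (π x))))
    (hle : ∫⁻ x, ENNReal.ofReal (π x) ≤ 1) :
    ∃ C, 0 < C ∧ ∀ x, π x ≤ C * Real.exp (M * ‖x‖) := by
  classical
  set ℓ : EuclideanSpace ℝ (Fin D) → ℝ := fun x => Real.log (π x) with hℓ
  set G := gradient ℓ with hG
  have hMcoe : ((Real.toNNReal M : ℝ≥0) : ℝ) = M := Real.coe_toNNReal _ hM.le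
  have hGnorm : ∀ ξ, ‖fderiv ℝ ℓ ξ‖ = ‖G ξ‖ := by
    intro ξ
    have : G ξ = (InnerProductSpace.toDual ℝ _).symm (fderiv ℝ ℓ ξ) := rfl
    rw [this, LinearIsometryEquiv.norm_map]
  have hGdist : ∀ x ξ, ‖G ξ - G x‖ ≤ M * ‖ξ - x‖ := by
    intro x ξ
    have := hlip.dist_le_mul ξ x
    rwa [hMcoe, dist_eq_norm, dist_eq_norm] at this
  have hπcont : Continuous π := by
    have : π = fun x => Real.exp (ℓ x) := by
      funext x; rw [hℓ]; exact (Real.exp_log (hπpos x)).symm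
    rw [this]; exact Real.continuous_exp.comp hdiff.continuous
  -- mean value estimate on the unit ball
  have key : ∀ x x', x' ∈ Metric.ball x 1 → π x * Real.exp (-(‖G x‖ + M)) ≤ π x' := by
    intro x x' hx'
    have hball : Convex ℝ (Metric.ball x 1) := convex_ball x 1
    have hbd : ∀ ξ ∈ Metric.ball x 1, ‖fderiv ℝ ℓ ξ‖ ≤ ‖G x‖ + M := by
      intro ξ hξ
      rw [hGnorm]
      calc ‖G ξ‖ ≤ ‖G x‖ + ‖G ξ - G x‖ := by
            simpa using norm_add_le (G x) (G ξ - G x)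
        _ ≤ ‖G x‖ + M * ‖ξ - x‖ := by linarith [hGdist x ξ]
        _ ≤ ‖G x‖ + M := by
            have := (Metric.mem_ball.1 hξ).le
            rw [← dist_eq_norm] at *
            nlinarith [dist_nonneg (x := ξ) (y := x)]
    have hmvt := hball.norm_image_sub_le_of_norm_fderiv_le
      (fun ξ _ => hdiff ξ) hbd (Metric.mem_ball_self one_pos) hx'
    have h1 : |ℓ x' - ℓ x| ≤ (‖G x‖ + M) := by
      rw [← Real.norm_eq_abs]
      refine hmvt.trans ?_
      have h2 : ‖x' - x‖ ≤ 1 := by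
        rw [← dist_eq_norm]; exact (Metric.mem_ball.1 hx').le
      nlinarith [norm_nonneg (G x), hM.le]
    have h3 : ℓ x - (‖G x‖ + M) ≤ ℓ x' := by
      have := abs_le.1 h1; linarith [this.1]
    have := Real.exp_le_exp.2 h3
    rw [Real.exp_sub] at this
    calc π x * Real.exp (-(‖G x‖ + M)) = Real.exp (ℓ x) * Real.exp (-(‖G x‖ + M)) := by
          rw [hℓ, Real.exp_log (hπpos x)]
      _ = Real.exp (ℓ x) / Real.exp (‖G x‖ + M) := by
          rw [Real.exp_neg]; ring
      _ ≤ Real.exp (ℓ x') := this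
      _ = π x' := by rw [hℓ, Real.exp_log (hπpos x')]
  -- integrate over the unit ball
  set B₀ : ℝ≥0∞ := volume (Metric.ball (0 : EuclideanSpace ℝ (Fin D)) 1) with hB₀
  have hB₀pos : 0 < B₀ := Metric.measure_ball_pos volume 0 one_pos
  have hB₀top : B₀ < ⊤ := measure_ball_lt_top
  have hmain : ∀ x, π x * Real.exp (-(‖G x‖ + M)) ≤ (B₀⁻¹).toReal := by
    intro x
    have h4 : ENNReal.ofReal (π x * Real.exp (-(‖G x‖ + M))) * B₀ ≤ 1 := by
      have h5 : ENNReal.ofReal (π x * Real.exp (-(‖G x‖ + M))) * B₀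
          = ∫⁻ _ in Metric.ball x 1, ENNReal.ofReal (π x * Real.exp (-(‖G x‖ + M))) := by
        rw [setLIntegral_const]
        congr 1
        rw [hB₀]
        exact (Measure.addHaar_ball_center volume x 1).symm
      rw [h5]
      calc ∫⁻ _ in Metric.ball x 1, ENNReal.ofReal (π x * Real.exp (-(‖G x‖ + M)))
          ≤ ∫⁻ ξ in Metric.ball x 1, ENNReal.ofReal (π ξ) := by
            refine setLIntegral_mono (hπcont.measurable.ennreal_ofReal) ?_
            intro ξ hξ
            exact ENNReal.ofReal_le_ofReal (key x ξ hξ)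
        _ ≤ ∫⁻ ξ, ENNReal.ofReal (π ξ) := setLIntegral_le_lintegral _ _
        _ ≤ 1 := hle
    have h6 : ENNReal.ofReal (π x * Real.exp (-(‖G x‖ + M))) ≤ B₀⁻¹ :=
      ENNReal.le_inv_iff_mul_le.2 h4
    exact (ENNReal.ofReal_le_iff_le_toReal (by simp [ENNReal.inv_ne_top, hB₀pos.ne'])).1 h6
  refine ⟨(B₀⁻¹).toReal * Real.exp (M + ‖G 0‖), ?_, ?_⟩
  · have : 0 < (B₀⁻¹).toReal := by
      refine ENNReal.toReal_pos ?_ ?_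
      · simp [hB₀top.ne]
      · simp [ENNReal.inv_ne_top, hB₀pos.ne']
    positivity
  · intro x
    have h7 := hmain x
    have h8 : ‖G x‖ ≤ ‖G 0‖ + M * ‖x‖ := by
      have := hGdist 0 x
      simp only [sub_zero] at this
      calc ‖G x‖ ≤ ‖G 0‖ + ‖G x - G 0‖ := by simpa using norm_add_le (G 0) (G x - G 0)
        _ ≤ ‖G 0‖ + M * ‖x‖ := by linarith
    have h9 : π x ≤ (B₀⁻¹).toReal * Real.exp (‖G x‖ + M) := by
      rw [Real.exp_neg, ← div_eq_mul_inv] at h7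
      exact (div_le_iff₀ (Real.exp_pos _)).1 h7
    refine h9.trans ?_
    rw [mul_assoc, ← Real.exp_add]
    have : 0 ≤ (B₀⁻¹).toReal := ENNReal.toReal_nonneg
    refine mul_le_mul_of_nonneg_left (Real.exp_le_exp.2 ?_) this
    linarith

lemma core (f g : EuclideanSpace ℝ (Fin D) → ℝ) (u : EuclideanSpace ℝ (Fin D)) (σ M : ℝ)
    (hσ : 0 < σ) (hM : 0 < M) (hu : ‖u‖ = 1)
    (hcontf : Continuous f) (hfpos : ∀ x, 0 < f x) (hcontg : Continuous g)
    (hDeriv : ∀ x (s : ℝ), HasDerivAt (fun s : ℝ => f (x - s • u))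
      (g (x - s • u) * f (x - s • u)) s)
    (hgshift : ∀ x (h : ℝ), 0 ≤ h → g (x + h • u) - g x ≤ (1/σ^2 + M) * h)
    (a b C1 c1 : ℝ) (ha : 0 ≤ a) (hb : 0 < b) (hC1 : 0 < C1)
    (hga : ∀ x, |g x| ≤ a + b * ‖x‖)
    (hfball : ∀ x ξ, ξ ∈ Metric.closedBall x 1 →
      f ξ ≤ C1 * Real.exp (c1 * ‖x‖ - ‖x‖^2/(2*σ^2))) :
    σ^2/(1+M*σ^2) ≤ (∫ x, ⟪u, x⟫^2 * f x) / (∫ x, f x)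
      - ((∫ x, ⟪u, x⟫ * f x) / (∫ x, f x))^2 := by
  have hσ2 : (0:ℝ) < σ^2 := by positivity
  have hL : 0 < 1/σ^2 + M := by positivity
  set L : ℝ := 1/σ^2 + M with hLdef
  -- integrability builder
  have haux : ∀ (K c : ℝ) (φ : EuclideanSpace ℝ (Fin D) → ℝ), Continuous φ →
      (∀ x, |φ x| ≤ K * Real.exp (c * ‖x‖ - ‖x‖^2/(2*σ^2))) → Integrable φ := by
    intro K c φ hc hbnd
    have hε : (0:ℝ) < 1/(2*σ^2) := by positivity
    refine ((integrable_exp_lin_sub_sq c (1/(2*σ^2)) hε).const_mul K).mono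
      hc.aestronglyMeasurable (Eventually.of_forall fun x => ?_)
    rw [Real.norm_eq_abs]
    refine (hbnd x).trans ?_
    have harg : c * ‖x‖ - 1/(2*σ^2) * ‖x‖^2 = c * ‖x‖ - ‖x‖^2/(2*σ^2) := by ring
    rw [Real.norm_eq_abs, harg]
    exact le_abs_self _
  -- basic bounds
  have htabs : ∀ x : EuclideanSpace ℝ (Fin D), |⟪u, x⟫| ≤ ‖x‖ := by
    intro x
    have := abs_real_inner_le_norm u x
    rwa [hu, one_mul] at this
  have hrle : ∀ r : ℝ, r ≤ Real.exp r := fun r =>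
    (by linarith [Real.add_one_le_exp r] : r ≤ Real.exp r)
  have hexp1 : ∀ (x : EuclideanSpace ℝ (Fin D)) (c : ℝ),
      Real.exp ‖x‖ * Real.exp (c * ‖x‖ - ‖x‖^2/(2*σ^2))
        = Real.exp ((c+1) * ‖x‖ - ‖x‖^2/(2*σ^2)) := by
    intro x c; rw [← Real.exp_add]; ring_nf
  have hexp2 : ∀ (x : EuclideanSpace ℝ (Fin D)) (c : ℝ),
      Real.exp (2*‖x‖) * Real.exp (c * ‖x‖ - ‖x‖^2/(2*σ^2))
        = Real.exp ((c+2) * ‖x‖ - ‖x‖^2/(2*σ^2)) := by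
    intro x c; rw [← Real.exp_add]; ring_nf
  have hf0 : ∀ x, f x ≤ C1 * Real.exp (c1 * ‖x‖ - ‖x‖^2/(2*σ^2)) := fun x =>
    hfball x x (Metric.mem_closedBall_self zero_le_one)
  have hfabs : ∀ x, |f x| = f x := fun x => abs_of_pos (hfpos x)
  have hgabs : ∀ x, |g x| ≤ (a+b) * Real.exp ‖x‖ := by
    intro x
    refine (hga x).trans ?_
    have h1 : (1:ℝ) ≤ Real.exp ‖x‖ := Real.one_le_exp (norm_nonneg x)
    have h2 : ‖x‖ ≤ Real.exp ‖x‖ := hrle _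
    nlinarith
  -- continuity of auxiliary functions
  have hcontt : Continuous (fun x : EuclideanSpace ℝ (Fin D) => ⟪u, x⟫) :=
    continuous_const.inner continuous_id
  -- integrability of the six integrands
  have If : Integrable f := haux C1 c1 f hcontf (fun x => by rw [hfabs]; exact hf0 x)
  have Itf : Integrable (fun x => ⟪u, x⟫ * f x) := by
    refine haux C1 (c1+1) _ (hcontt.mul hcontf) (fun x => ?_)
    rw [abs_mul, hfabs, ← hexp1 x c1]
    calc |⟪u,x⟫| * f x ≤ Real.exp ‖x‖ * (C1 * Real.exp (c1 * ‖x‖ - ‖x‖^2/(2*σ^2))) := by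
          refine mul_le_mul ((htabs x).trans (hrle _)) (hf0 x) (hfpos x).le (Real.exp_pos _).le
      _ = C1 * (Real.exp ‖x‖ * Real.exp (c1 * ‖x‖ - ‖x‖^2/(2*σ^2))) := by ring
  have It2f : Integrable (fun x => ⟪u, x⟫^2 * f x) := by
    refine haux C1 (c1+2) _ ((hcontt.pow 2).mul hcontf) (fun x => ?_)
    rw [abs_mul, hfabs, ← hexp2 x c1]
    have h1 : |⟪u,x⟫^2| ≤ Real.exp (2*‖x‖) := by
      rw [abs_pow]
      calc |⟪u,x⟫|^2 ≤ ‖x‖^2 := by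
            have := htabs x; nlinarith [abs_nonneg ⟪u,x⟫]
        _ ≤ (Real.exp ‖x‖)^2 := by nlinarith [hrle ‖x‖, norm_nonneg x]
        _ = Real.exp (2*‖x‖) := by rw [sq, ← Real.exp_add]; ring_nf
    calc |⟪u,x⟫^2| * f x ≤ Real.exp (2*‖x‖) * (C1 * Real.exp (c1 * ‖x‖ - ‖x‖^2/(2*σ^2))) :=
          mul_le_mul h1 (hf0 x) (hfpos x).le (Real.exp_pos _).le
      _ = C1 * (Real.exp (2*‖x‖) * Real.exp (c1 * ‖x‖ - ‖x‖^2/(2*σ^2))) := by ring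
  have Igf : Integrable (fun x => g x * f x) := by
    refine haux ((a+b)*C1) (c1+1) _ (hcontg.mul hcontf) (fun x => ?_)
    rw [abs_mul, hfabs, ← hexp1 x c1]
    calc |g x| * f x ≤ ((a+b) * Real.exp ‖x‖) * (C1 * Real.exp (c1 * ‖x‖ - ‖x‖^2/(2*σ^2))) :=
          mul_le_mul (hgabs x) (hf0 x) (hfpos x).le (by positivity)
      _ = (a+b)*C1 * (Real.exp ‖x‖ * Real.exp (c1 * ‖x‖ - ‖x‖^2/(2*σ^2))) := by ring
  have Itgf : Integrable (fun x => ⟪u, x⟫ * (g x * f x)) := by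
    refine haux ((a+b)*C1) (c1+2) _ (hcontt.mul (hcontg.mul hcontf)) (fun x => ?_)
    rw [abs_mul, abs_mul, hfabs, ← hexp2 x c1]
    have h2 : Real.exp (2*‖x‖) = Real.exp ‖x‖ * Real.exp ‖x‖ := by
      rw [← Real.exp_add]; ring_nf
    calc |⟪u,x⟫| * (|g x| * f x)
        ≤ Real.exp ‖x‖ * (((a+b) * Real.exp ‖x‖) * (C1 * Real.exp (c1 * ‖x‖ - ‖x‖^2/(2*σ^2)))) := by
          refine mul_le_mul ((htabs x).trans (hrle _)) ?_
            (mul_nonneg (abs_nonneg _) (hfpos x).le) (Real.exp_pos _).le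
          exact mul_le_mul (hgabs x) (hf0 x) (hfpos x).le (by positivity)
      _ = (a+b)*C1 * (Real.exp (2*‖x‖) * Real.exp (c1 * ‖x‖ - ‖x‖^2/(2*σ^2))) := by
          rw [h2]; ring
  have Ig2f : Integrable (fun x => g x^2 * f x) := by
    refine haux ((a+b)^2*C1) (c1+2) _ ((hcontg.pow 2).mul hcontf) (fun x => ?_)
    rw [abs_mul, hfabs, ← hexp2 x c1]
    have h2 : Real.exp (2*‖x‖) = Real.exp ‖x‖ * Real.exp ‖x‖ := by
      rw [← Real.exp_add]; ring_nf
    have h1 : |g x^2| ≤ (a+b)^2 * Real.exp (2*‖x‖) := by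
      rw [abs_pow, h2]
      calc |g x|^2 ≤ ((a+b) * Real.exp ‖x‖)^2 := by
            have := hgabs x; nlinarith [abs_nonneg (g x)]
        _ = (a+b)^2 * (Real.exp ‖x‖ * Real.exp ‖x‖) := by ring
    calc |g x^2| * f x ≤ ((a+b)^2 * Real.exp (2*‖x‖)) * (C1 * Real.exp (c1 * ‖x‖ - ‖x‖^2/(2*σ^2))) :=
          mul_le_mul h1 (hf0 x) (hfpos x).le (by positivity)
      _ = (a+b)^2*C1 * (Real.exp (2*‖x‖) * Real.exp (c1 * ‖x‖ - ‖x‖^2/(2*σ^2))) := by ring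
  -- uniform bound on |g|·f over unit balls
  have hsup : ∀ x ξ, ξ ∈ Metric.closedBall x 1 →
      |g ξ * f ξ| ≤ (a+2*b)*C1 * Real.exp ((c1+1) * ‖x‖ - ‖x‖^2/(2*σ^2)) := by
    intro x ξ hξ
    have hξx : ‖ξ‖ ≤ ‖x‖ + 1 := by
      have h0 := mem_closedBall_iff_norm.1 hξ
      have h1 := norm_sub_norm_le ξ x
      linarith
    have h1 : |g ξ| ≤ (a + b + b*‖x‖) := by
      refine (hga ξ).trans ?_
      nlinarith
    have h2 : a + b + b*‖x‖ ≤ (a+2*b) * Real.exp ‖x‖ := by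
      have e1 : (1:ℝ) ≤ Real.exp ‖x‖ := Real.one_le_exp (norm_nonneg x)
      have e2 : ‖x‖ ≤ Real.exp ‖x‖ := hrle _
      nlinarith
    rw [abs_mul, hfabs]
    calc |g ξ| * f ξ ≤ ((a+2*b) * Real.exp ‖x‖) * (C1 * Real.exp (c1 * ‖x‖ - ‖x‖^2/(2*σ^2))) :=
          mul_le_mul (h1.trans h2) (hfball x ξ hξ) (hfpos ξ).le (by positivity)
      _ = (a+2*b)*C1 * (Real.exp ‖x‖ * Real.exp (c1 * ‖x‖ - ‖x‖^2/(2*σ^2))) := by ring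
      _ = (a+2*b)*C1 * Real.exp ((c1+1) * ‖x‖ - ‖x‖^2/(2*σ^2)) := by rw [hexp1 x c1]
  -- the mean value bound
  have hMVT : ∀ x (h : ℝ), 0 < h → h ≤ 1 → |f x - f (x - h • u)| ≤
      h * ((a+2*b)*C1 * Real.exp ((c1+1) * ‖x‖ - ‖x‖^2/(2*σ^2))) := by
    intro x h h0 h1
    have hmem : ∀ τ : ℝ, τ ∈ Set.Icc (0:ℝ) 1 → x - τ • u ∈ Metric.closedBall x 1 := by
      intro τ hτ
      rw [mem_closedBall_iff_norm]
      have : x - τ • u - x = -(τ • u) := by abel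
      rw [this, norm_neg, norm_smul, hu, mul_one, Real.norm_eq_abs,
        abs_of_nonneg hτ.1]
      exact hτ.2
    have := (convex_Icc (0:ℝ) 1).norm_image_sub_le_of_norm_hasDerivWithin_le
      (f := fun s : ℝ => f (x - s • u)) (f' := fun s => g (x - s • u) * f (x - s • u))
      (fun τ hτ => (hDeriv x τ).hasDerivWithinAt)
      (fun τ hτ => by
        rw [Real.norm_eq_abs]
        exact hsup x _ (hmem τ hτ))
      (Set.mem_Icc.2 ⟨le_refl 0, zero_le_one⟩) (Set.mem_Icc.2 ⟨h0.le, h1⟩)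
    rw [Real.norm_eq_abs, Real.norm_eq_abs] at this
    simp only [zero_smul, sub_zero] at this
    rw [abs_of_pos h0] at this
    calc |f x - f (x - h • u)| = |f (x - h • u) - f x| := abs_sub_comm _ _
      _ ≤ (a+2*b)*C1 * Real.exp ((c1+1) * ‖x‖ - ‖x‖^2/(2*σ^2)) * h := this
      _ = h * ((a+2*b)*C1 * Real.exp ((c1+1) * ‖x‖ - ‖x‖^2/(2*σ^2))) := by ring
  -- difference quotient sequence
  set hn : ℕ → ℝ := fun n => 1/(n+1) with hhn
  have hn0 : ∀ n, 0 < hn n := by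
    intro n; rw [hhn]; positivity
  have hn1 : ∀ n, hn n ≤ 1 := by
    intro n; rw [hhn]
    rw [div_le_one (by positivity)]
    simp
  have htends : Tendsto hn atTop (𝓝[≠] (0:ℝ)) := by
    refine tendsto_nhdsWithin_of_tendsto_nhds_of_eventually_within _
      tendsto_one_div_add_atTop_nhds_zero_nat ?_
    exact Eventually.of_forall fun n => (hn0 n).ne'
  have hcshift : ∀ c : EuclideanSpace ℝ (Fin D), Continuous (fun x => f (x - c)) :=
    fun c => hcontf.comp (continuous_id.sub continuous_const)
  have hbase : ∀ x, Tendsto (fun n => (f x - f (x - hn n • u))/(hn n)) atTop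
      (𝓝 (-(g x * f x))) := by
    intro x
    have hd : HasDerivAt (fun s : ℝ => f (x - s • u)) (g x * f x) 0 := by
      have := hDeriv x 0
      simpa using this
    have hs := hasDerivAt_iff_tendsto_slope.1 hd
    have hcomp := (hs.comp htends).neg
    refine Tendsto.congr ?_ hcomp
    intro n
    rw [Function.comp_apply, slope_def_field]
    simp only [zero_smul, sub_zero]
    rw [← neg_div, neg_sub]
  have hmemsub : ∀ (x c : EuclideanSpace ℝ (Fin D)), ‖c‖ ≤ 1 → x - c ∈ closedBall x 1 := by
    intro x c hc
    rw [mem_closedBall_iff_norm]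
    have : x - c - x = -c := by abel
    rw [this, norm_neg]
    exact hc
  have hnorm_hnu : ∀ n, ‖hn n • u‖ ≤ 1 := by
    intro n
    rw [norm_smul, hu, mul_one, Real.norm_eq_abs, abs_of_pos (hn0 n)]
    exact hn1 n
  -- dominating function
  have hΨcont : Continuous (fun x : EuclideanSpace ℝ (Fin D) =>
      (a+2*b)*C1 * Real.exp ((c1+1) * ‖x‖ - ‖x‖^2/(2*σ^2))) := by
    have h1 : Continuous (fun x : EuclideanSpace ℝ (Fin D) =>
        (c1+1) * ‖x‖ - ‖x‖^2/(2*σ^2)) :=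
      (continuous_const.mul continuous_norm).sub ((continuous_norm.pow 2).div_const _)
    exact continuous_const.mul (Real.continuous_exp.comp h1)
  have IΨ : Integrable (fun x : EuclideanSpace ℝ (Fin D) =>
      (a+2*b)*C1 * Real.exp ((c1+1) * ‖x‖ - ‖x‖^2/(2*σ^2))) := by
    refine haux ((a+2*b)*C1) (c1+1) _ hΨcont (fun x => ?_)
    rw [abs_of_nonneg (by positivity)]
  have hquotbd : ∀ n x, |(f x - f (x - hn n • u))/(hn n)| ≤
      (a+2*b)*C1 * Real.exp ((c1+1) * ‖x‖ - ‖x‖^2/(2*σ^2)) := by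
    intro n x
    rw [abs_div, abs_of_pos (hn0 n), div_le_iff₀ (hn0 n)]
    calc |f x - f (x - hn n • u)| ≤ hn n * ((a+2*b)*C1 * Real.exp ((c1+1) * ‖x‖ - ‖x‖^2/(2*σ^2))) :=
          hMVT x (hn n) (hn0 n) (hn1 n)
      _ = (a+2*b)*C1 * Real.exp ((c1+1) * ‖x‖ - ‖x‖^2/(2*σ^2)) * hn n := by ring
  -- Identity 1 : ∫ g f = 0
  have key1 : Tendsto (fun n => ∫ x, (f x - f (x - hn n • u))/(hn n)) atTop
      (𝓝 (∫ x, -(g x * f x))) := by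
    refine tendsto_integral_of_dominated_convergence _ ?_ IΨ ?_ ?_
    · intro n
      exact ((hcontf.sub (hcshift _)).div_const _).aestronglyMeasurable
    · intro n
      filter_upwards with x
      rw [Real.norm_eq_abs]
      exact hquotbd n x
    · filter_upwards with x
      exact hbase x
  have val1 : ∀ n, ∫ x, (f x - f (x - hn n • u))/(hn n) = 0 := by
    intro n
    have e1 : ∫ x, f (x - hn n • u) = ∫ x, f x := integral_sub_right_eq_self f (hn n • u)
    calc ∫ x, (f x - f (x - hn n • u))/(hn n)
        = (∫ x, (f x - f (x - hn n • u)))/(hn n) := integral_div _ _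
      _ = ((∫ x, f x) - ∫ x, f (x - hn n • u))/(hn n) := by
          rw [integral_sub If (If.comp_sub_right _)]
      _ = 0 := by rw [e1, sub_self, zero_div]
  have I1 : ∫ x, g x * f x = 0 := by
    have h0 : Tendsto (fun n => ∫ x, (f x - f (x - hn n • u))/(hn n)) atTop (𝓝 0) := by
      simp only [val1]
      exact tendsto_const_nhds
    have h2 := tendsto_nhds_unique key1 h0
    rwa [integral_neg, neg_eq_zero] at h2
  -- inner product shift
  have hinner : ∀ (h : ℝ) (x : EuclideanSpace ℝ (Fin D)), ⟪u, x + h • u⟫ = ⟪u, x⟫ + h := by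
    intro h x
    rw [inner_add_right, real_inner_smul_right, real_inner_self_eq_norm_mul_norm, hu]
    ring
  -- integrability of shifted integrands
  have Itfc : ∀ c : EuclideanSpace ℝ (Fin D), ‖c‖ ≤ 1 →
      Integrable (fun x => ⟪u, x⟫ * f (x - c)) := by
    intro c hc
    refine haux C1 (c1+1) _ (hcontt.mul (hcshift c)) (fun x => ?_)
    rw [abs_mul, ← hexp1 x c1]
    calc |⟪u,x⟫| * |f (x - c)|
        ≤ Real.exp ‖x‖ * (C1 * Real.exp (c1 * ‖x‖ - ‖x‖^2/(2*σ^2))) := by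
          refine mul_le_mul ((htabs x).trans (hrle _)) ?_ (abs_nonneg _) (Real.exp_pos _).le
          rw [abs_of_pos (hfpos _)]
          exact hfball x _ (hmemsub x c hc)
      _ = C1 * (Real.exp ‖x‖ * Real.exp (c1 * ‖x‖ - ‖x‖^2/(2*σ^2))) := by ring
  have Igfc : ∀ c : EuclideanSpace ℝ (Fin D), ‖c‖ ≤ 1 →
      Integrable (fun x => g x * f (x - c)) := by
    intro c hc
    refine haux ((a+b)*C1) (c1+1) _ (hcontg.mul (hcshift c)) (fun x => ?_)
    rw [abs_mul, ← hexp1 x c1]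
    calc |g x| * |f (x - c)|
        ≤ ((a+b) * Real.exp ‖x‖) * (C1 * Real.exp (c1 * ‖x‖ - ‖x‖^2/(2*σ^2))) := by
          refine mul_le_mul (hgabs x) ?_ (abs_nonneg _) (by positivity)
          rw [abs_of_pos (hfpos _)]
          exact hfball x _ (hmemsub x c hc)
      _ = (a+b)*C1 * (Real.exp ‖x‖ * Real.exp (c1 * ‖x‖ - ‖x‖^2/(2*σ^2))) := by ring
  have Igshift : ∀ c : EuclideanSpace ℝ (Fin D), ‖c‖ ≤ 1 →
      Integrable (fun x => g (x + c) * f x) := by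
    intro c hc
    refine haux ((a+2*b)*C1) (c1+1) _
      ((hcontg.comp (continuous_id.add continuous_const)).mul hcontf) (fun x => ?_)
    rw [abs_mul, hfabs, ← hexp1 x c1]
    have h1 : |g (x + c)| ≤ (a + b + b*‖x‖) := by
      refine (hga _).trans ?_
      have h2 : ‖x + c‖ ≤ ‖x‖ + 1 := by
        refine (norm_add_le x c).trans ?_
        linarith
      nlinarith
    have h2 : a + b + b*‖x‖ ≤ (a+2*b) * Real.exp ‖x‖ := by
      have e1 : (1:ℝ) ≤ Real.exp ‖x‖ := Real.one_le_exp (norm_nonneg x)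
      have e2 : ‖x‖ ≤ Real.exp ‖x‖ := hrle _
      nlinarith
    calc |g (x + c)| * f x
        ≤ ((a+2*b) * Real.exp ‖x‖) * (C1 * Real.exp (c1 * ‖x‖ - ‖x‖^2/(2*σ^2))) :=
          mul_le_mul (h1.trans h2) (hf0 x) (hfpos x).le (by positivity)
      _ = (a+2*b)*C1 * (Real.exp ‖x‖ * Real.exp (c1 * ‖x‖ - ‖x‖^2/(2*σ^2))) := by ring
  -- Identity 2 : ∫ t g f = ∫ f
  have key2 : Tendsto (fun n => ∫ x, ⟪u, x⟫ * ((f x - f (x - hn n • u))/(hn n))) atTop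
      (𝓝 (∫ x, ⟪u, x⟫ * -(g x * f x))) := by
    refine tendsto_integral_of_dominated_convergence
      (fun x => (a+2*b)*C1 * Real.exp ((c1+2) * ‖x‖ - ‖x‖^2/(2*σ^2))) ?_ ?_ ?_ ?_
    · intro n
      exact (hcontt.mul ((hcontf.sub (hcshift _)).div_const _)).aestronglyMeasurable
    · refine haux ((a+2*b)*C1) (c1+2) _ ?_ (fun x => by rw [abs_of_nonneg (by positivity)])
      exact continuous_const.mul (Real.continuous_exp.comp
        ((continuous_const.mul continuous_norm).sub ((continuous_norm.pow 2).div_const _)))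
    · intro n
      filter_upwards with x
      rw [Real.norm_eq_abs, abs_mul]
      have h1 := hquotbd n x
      calc |⟪u,x⟫| * |(f x - f (x - hn n • u))/(hn n)|
          ≤ Real.exp ‖x‖ * ((a+2*b)*C1 * Real.exp ((c1+1) * ‖x‖ - ‖x‖^2/(2*σ^2))) := by
            refine mul_le_mul ((htabs x).trans (hrle _)) h1 (abs_nonneg _) (Real.exp_pos _).le
        _ = (a+2*b)*C1 * (Real.exp ‖x‖ * Real.exp ((c1+1) * ‖x‖ - ‖x‖^2/(2*σ^2))) := by ring
        _ = (a+2*b)*C1 * Real.exp ((c1+2) * ‖x‖ - ‖x‖^2/(2*σ^2)) := by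
            rw [hexp1 x (c1+1)]
            ring_nf
    · filter_upwards with x
      exact (hbase x).const_mul _
  have val2 : ∀ n, ∫ x, ⟪u, x⟫ * ((f x - f (x - hn n • u))/(hn n)) = -(∫ x, f x) := by
    intro n
    have e2 : ∫ x, ⟪u, x⟫ * f (x - hn n • u) = (∫ x, ⟪u, x⟫ * f x) + (hn n) * ∫ x, f x := by
      calc ∫ x, ⟪u, x⟫ * f (x - hn n • u)
          = ∫ x, ⟪u, x + hn n • u⟫ * f (x + hn n • u - hn n • u) :=
            (integral_add_right_eq_self (fun z => ⟪u, z⟫ * f (z - hn n • u)) (hn n • u)).symm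
        _ = ∫ x, (⟪u, x⟫ * f x + (hn n) * f x) := by
            congr 1
            funext x
            rw [hinner, add_sub_cancel_right]
            ring
        _ = _ := by rw [integral_add Itf (If.const_mul _), integral_const_mul]
    calc ∫ x, ⟪u, x⟫ * ((f x - f (x - hn n • u))/(hn n))
        = ∫ x, (⟪u, x⟫ * f x - ⟪u, x⟫ * f (x - hn n • u))/(hn n) := by
          congr 1; funext x; ring
      _ = ((∫ x, ⟪u, x⟫ * f x) - ∫ x, ⟪u, x⟫ * f (x - hn n • u))/(hn n) := by
          rw [integral_div, integral_sub Itf (Itfc _ (hnorm_hnu n))]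
      _ = -(∫ x, f x) := by
          rw [e2, sub_add_cancel_left, neg_div, mul_div_cancel_left₀ _ (hn0 n).ne']
  have I2 : ∫ x, ⟪u, x⟫ * (g x * f x) = ∫ x, f x := by
    have h0 : Tendsto (fun n => ∫ x, ⟪u, x⟫ * ((f x - f (x - hn n • u))/(hn n))) atTop
        (𝓝 (-(∫ x, f x))) := by
      simp only [val2]
      exact tendsto_const_nhds
    have h2 := tendsto_nhds_unique key2 h0
    have e3 : ∫ x, ⟪u, x⟫ * -(g x * f x) = -∫ x, ⟪u, x⟫ * (g x * f x) := by
      rw [← integral_neg]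
      congr 1; funext x; ring
    rw [e3] at h2
    exact neg_injective h2
  -- Identity 3 : ∫ g² f ≤ L ∫ f
  have key3 : Tendsto (fun n => ∫ x, g x * ((f x - f (x - hn n • u))/(hn n))) atTop
      (𝓝 (∫ x, g x * -(g x * f x))) := by
    refine tendsto_integral_of_dominated_convergence
      (fun x => (a+b)*((a+2*b)*C1) * Real.exp ((c1+2) * ‖x‖ - ‖x‖^2/(2*σ^2))) ?_ ?_ ?_ ?_
    · intro n
      exact (hcontg.mul ((hcontf.sub (hcshift _)).div_const _)).aestronglyMeasurable
    · refine haux ((a+b)*((a+2*b)*C1)) (c1+2) _ ?_ (fun x => by rw [abs_of_nonneg (by positivity)])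
      exact continuous_const.mul (Real.continuous_exp.comp
        ((continuous_const.mul continuous_norm).sub ((continuous_norm.pow 2).div_const _)))
    · intro n
      filter_upwards with x
      rw [Real.norm_eq_abs, abs_mul]
      have h1 := hquotbd n x
      calc |g x| * |(f x - f (x - hn n • u))/(hn n)|
          ≤ ((a+b) * Real.exp ‖x‖) * ((a+2*b)*C1 * Real.exp ((c1+1) * ‖x‖ - ‖x‖^2/(2*σ^2))) :=
            mul_le_mul (hgabs x) h1 (abs_nonneg _) (by positivity)
        _ = (a+b)*((a+2*b)*C1) * (Real.exp ‖x‖ * Real.exp ((c1+1) * ‖x‖ - ‖x‖^2/(2*σ^2))) := by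
            ring
        _ = (a+b)*((a+2*b)*C1) * Real.exp ((c1+2) * ‖x‖ - ‖x‖^2/(2*σ^2)) := by
            rw [hexp1 x (c1+1)]
            ring_nf
    · filter_upwards with x
      exact (hbase x).const_mul _
  have val3 : ∀ n, -((1/σ^2 + M) * ∫ x, f x) ≤ ∫ x, g x * ((f x - f (x - hn n • u))/(hn n)) := by
    intro n
    have e4 : ∫ x, g x * f (x - hn n • u) = ∫ x, g (x + hn n • u) * f x := by
      calc ∫ x, g x * f (x - hn n • u)
          = ∫ x, g (x + hn n • u) * f (x + hn n • u - hn n • u) :=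
            (integral_add_right_eq_self (fun z => g z * f (z - hn n • u)) (hn n • u)).symm
        _ = ∫ x, g (x + hn n • u) * f x := by
            congr 1; funext x; rw [add_sub_cancel_right]
    have Isub : Integrable (fun x => (g x - g (x + hn n • u))/(hn n) * f x) := by
      have e5 : (fun x => (g x - g (x + hn n • u))/(hn n) * f x)
          = fun x => (g x * f x - g (x + hn n • u) * f x)/(hn n) := by
        funext x; ring
      rw [e5]
      exact (Igf.sub (Igshift _ (hnorm_hnu n))).div_const _
    have e6 : ∫ x, g x * ((f x - f (x - hn n • u))/(hn n))
        = ∫ x, (g x - g (x + hn n • u))/(hn n) * f x := by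
      calc ∫ x, g x * ((f x - f (x - hn n • u))/(hn n))
          = ∫ x, (g x * f x - g x * f (x - hn n • u))/(hn n) := by
            congr 1; funext x; ring
        _ = ((∫ x, g x * f x) - ∫ x, g x * f (x - hn n • u))/(hn n) := by
            rw [integral_div, integral_sub Igf (Igfc _ (hnorm_hnu n))]
        _ = ((∫ x, g x * f x) - ∫ x, g (x + hn n • u) * f x)/(hn n) := by rw [e4]
        _ = ∫ x, (g x * f x - g (x + hn n • u) * f x)/(hn n) := by
            rw [integral_div, integral_sub Igf (Igshift _ (hnorm_hnu n))]
        _ = ∫ x, (g x - g (x + hn n • u))/(hn n) * f x := by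
            congr 1; funext x; ring
    rw [e6]
    have hge : ∀ x, (-(1/σ^2 + M)) * f x ≤ (g x - g (x + hn n • u))/(hn n) * f x := by
      intro x
      have h6 := hgshift x (hn n) (hn0 n).le
      have h7 : -(1/σ^2 + M) ≤ (g x - g (x + hn n • u))/(hn n) := by
        rw [le_div_iff₀ (hn0 n)]
        rw [hLdef] at h6
        linarith
      exact mul_le_mul_of_nonneg_right h7 (hfpos x).le
    have h8 := integral_mono (If.const_mul (-(1/σ^2 + M))) Isub hge
    rw [integral_const_mul] at h8
    linarith
  have I3 : ∫ x, g x^2 * f x ≤ (1/σ^2 + M) * ∫ x, f x := by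
    have h9 := ge_of_tendsto key3 (Eventually.of_forall val3)
    have e7 : ∫ x, g x * -(g x * f x) = -∫ x, g x^2 * f x := by
      rw [← integral_neg]
      congr 1; funext x; ring
    rw [e7] at h9
    linarith
  -- positivity of the normalisation
  have hZ : 0 < ∫ x, f x := by
    refine (integral_pos_iff_support_of_nonneg (fun x => (hfpos x).le) If).2 ?_
    have hsupp : Function.support f = Set.univ :=
      Set.eq_univ_of_forall (fun x => Function.mem_support.2 (hfpos x).ne')
    rw [hsupp]
    exact isOpen_univ.measure_pos volume Set.univ_nonempty
  have hG2 : 0 ≤ ∫ x, g x^2 * f x :=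
    integral_nonneg fun x => mul_nonneg (sq_nonneg _) (hfpos x).le
  -- the quadratic expansion
  have hquad : ∀ lam : ℝ, 0 ≤ (∫ x, ⟪u, x⟫^2 * f x)
      - 2*((∫ x, ⟪u, x⟫ * f x)/(∫ x, f x))*(∫ x, ⟪u, x⟫ * f x)
      + ((∫ x, ⟪u, x⟫ * f x)/(∫ x, f x))^2*(∫ x, f x)
      - 2*lam*(∫ x, f x) + lam^2*(∫ x, g x^2 * f x) := by
    intro lam
    set m : ℝ := (∫ x, ⟪u, x⟫ * f x)/(∫ x, f x) with hm
    have hnn : 0 ≤ ∫ x, ((⟪u, x⟫ - m) - lam * g x)^2 * f x :=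
      integral_nonneg fun x => mul_nonneg (sq_nonneg _) (hfpos x).le
    have IB : Integrable (fun x => (-2*m) * (⟪u, x⟫ * f x)) := Itf.const_mul (-2*m)
    have IC : Integrable (fun x => m^2 * f x) := If.const_mul (m^2)
    have ID : Integrable (fun x => (-2*lam) * (⟪u, x⟫ * (g x * f x))) := Itgf.const_mul (-2*lam)
    have IE : Integrable (fun x => (2*lam*m) * (g x * f x)) := Igf.const_mul (2*lam*m)
    have IF2 : Integrable (fun x => lam^2 * (g x^2 * f x)) := Ig2f.const_mul (lam^2)
    have IT5a : Integrable (fun x => (2*lam*m) * (g x * f x) + lam^2 * (g x^2 * f x)) :=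
      IE.add IF2
    have IT5 : Integrable (fun x => (-2*lam) * (⟪u, x⟫ * (g x * f x)) + ((2*lam*m) * (g x * f x)
        + lam^2 * (g x^2 * f x))) := ID.add (IE.add IF2)
    have IT4 : Integrable (fun x => m^2 * f x + ((-2*lam) * (⟪u, x⟫ * (g x * f x))
        + ((2*lam*m) * (g x * f x) + lam^2 * (g x^2 * f x)))) := IC.add IT5
    have IT3 : Integrable (fun x => (-2*m) * (⟪u, x⟫ * f x) + (m^2 * f x
        + ((-2*lam) * (⟪u, x⟫ * (g x * f x)) + ((2*lam*m) * (g x * f x)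
        + lam^2 * (g x^2 * f x))))) := IB.add IT4
    have hsplit : ∫ x, ((⟪u, x⟫ - m) - lam * g x)^2 * f x
        = (∫ x, ⟪u, x⟫^2 * f x) - 2*m*(∫ x, ⟪u, x⟫ * f x) + m^2*(∫ x, f x)
          - 2*lam*(∫ x, f x) + lam^2*(∫ x, g x^2 * f x) := by
      have e1 : (fun x => ((⟪u, x⟫ - m) - lam * g x)^2 * f x)
          = fun x => ⟪u, x⟫^2 * f x + ((-2*m) * (⟪u, x⟫ * f x) + (m^2 * f x
            + ((-2*lam) * (⟪u, x⟫ * (g x * f x)) + ((2*lam*m) * (g x * f x)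
            + lam^2 * (g x^2 * f x))))) := by
        funext x
        ring
      rw [e1, integral_add It2f IT3, integral_add IB IT4, integral_add IC IT5,
        integral_add ID IT5a, integral_add IE IF2,
        integral_const_mul, integral_const_mul, integral_const_mul, integral_const_mul,
        integral_const_mul, I1, I2]
      ring
    rw [hsplit] at hnn
    linarith
  -- pure algebra from here on
  have habstract : ∀ Z W G2 : ℝ, 0 < Z → 0 ≤ G2 → G2 ≤ (1/σ^2 + M) * Z →
      (∀ lam : ℝ, 0 ≤ W - 2*lam*Z + lam^2*G2) → Z ≤ W * (1/σ^2 + M) := by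
    intro Z W G2 hZ' hG2' hG2le hq
    have hW0 : 0 ≤ W := by
      have := hq 0
      simpa using this
    have hLpos : (0:ℝ) < 1/σ^2 + M := by positivity
    rcases eq_or_lt_of_le hG2' with hG2eq | hG2pos
    · exfalso
      have h10 := hq ((W + 1)/(2*Z))
      rw [← hG2eq] at h10
      have hZne : Z ≠ 0 := hZ'.ne'
      have e2 : 2*((W + 1)/(2*Z))*Z = W + 1 := by
        field_simp
      nlinarith
    · have h11 := hq (Z/G2)
      have hG2ne : G2 ≠ 0 := hG2pos.ne'
      have e3 : W - 2*(Z/G2)*Z + (Z/G2)^2*G2 = W - Z^2/G2 := by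
        field_simp
        ring
      rw [e3] at h11
      have h13 : Z^2 ≤ W * G2 := by
        have h' : Z^2/G2 ≤ W := by linarith
        exact (div_le_iff₀ hG2pos).1 h'
      have h14 : W * G2 ≤ W * ((1/σ^2 + M) * Z) :=
        mul_le_mul_of_nonneg_left hG2le hW0
      have h15 : Z*Z ≤ (W*(1/σ^2 + M))*Z := by nlinarith [h13, h14]
      exact le_of_mul_le_mul_right h15 hZ'
  have hLpos : (0:ℝ) < 1/σ^2 + M := by positivity
  have h1Mσ : (0:ℝ) < 1 + M*σ^2 := by positivity
  have hZW := habstract (∫ x, f x)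
    ((∫ x, ⟪u, x⟫^2 * f x) - 2*((∫ x, ⟪u, x⟫ * f x)/(∫ x, f x))*(∫ x, ⟪u, x⟫ * f x)
      + ((∫ x, ⟪u, x⟫ * f x)/(∫ x, f x))^2*(∫ x, f x))
    (∫ x, g x^2 * f x) hZ hG2 I3 (fun lam => by linarith [hquad lam])
  have hZne : (∫ x, f x) ≠ 0 := hZ.ne'
  have e4 : (∫ x, ⟪u, x⟫^2 * f x)/(∫ x, f x) - ((∫ x, ⟪u, x⟫ * f x)/(∫ x, f x))^2
      = ((∫ x, ⟪u, x⟫^2 * f x) - 2*((∫ x, ⟪u, x⟫ * f x)/(∫ x, f x))*(∫ x, ⟪u, x⟫ * f x)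
        + ((∫ x, ⟪u, x⟫ * f x)/(∫ x, f x))^2*(∫ x, f x))/(∫ x, f x) := by
    field_simp
    ring
  rw [e4]
  have e5 : σ^2/(1+M*σ^2) = 1/(1/σ^2 + M) := by
    rw [div_eq_div_iff h1Mσ.ne' hLpos.ne']
    field_simp
  rw [e5, div_le_div_iff₀ hLpos hZ]
  nlinarith [hZW]

lemma main_ineq (π : EuclideanSpace ℝ (Fin D) → ℝ) (M σ : ℝ)
    (y u : EuclideanSpace ℝ (Fin D))
    (hM : 0 < M) (hσ : 0 < σ) (hu : ‖u‖ = 1)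
    (hπpos : ∀ x, 0 < π x)
    (hdiff : Differentiable ℝ (fun x : EuclideanSpace ℝ (Fin D) => Real.log (π x)))
    (hlip : LipschitzWith (Real.toNNReal M)
      (gradient (fun x : EuclideanSpace ℝ (Fin D) => Real.log (π x))))
    (hC : ∃ C, 0 < C ∧ ∀ x, π x ≤ C * Real.exp (M * ‖x‖)) :
    σ^2/(1+M*σ^2) ≤
      (∫ x, ⟪u, x⟫^2 * (π x * gaussWeight σ y x)) / (∫ x, π x * gaussWeight σ y x)
        - ((∫ x, ⟪u, x⟫ * (π x * gaussWeight σ y x)) / (∫ x, π x * gaussWeight σ y x))^2 := by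
  obtain ⟨C, hCpos, hCbd⟩ := hC
  have hσ2 : (0:ℝ) < σ^2 := by positivity
  set ℓ : EuclideanSpace ℝ (Fin D) → ℝ := fun x => Real.log (π x) with hℓdef
  set G := gradient ℓ with hGdef
  have hMcoe : ((Real.toNNReal M : ℝ≥0) : ℝ) = M := Real.coe_toNNReal _ hM.le
  have hGlip : ∀ p q : EuclideanSpace ℝ (Fin D), ‖G p - G q‖ ≤ M * ‖p - q‖ := by
    intro p q
    have := hlip.dist_le_mul p q
    rwa [hMcoe, dist_eq_norm, dist_eq_norm] at this
  have hπexp : ∀ x, π x = Real.exp (ℓ x) := fun x => (Real.exp_log (hπpos x)).symm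
  have hπcont : Continuous π := by
    have : π = fun x => Real.exp (ℓ x) := funext hπexp
    rw [this]
    exact Real.continuous_exp.comp hdiff.continuous
  have hwcont : Continuous (fun x => gaussWeight σ y x) := by
    show Continuous fun x : EuclideanSpace ℝ (Fin D) => Real.exp (-‖y - x‖^2/(2*σ^2))
    exact Real.continuous_exp.comp
      ((((continuous_const.sub continuous_id).norm.pow 2).neg).div_const _)
  have hcontf : Continuous (fun x => π x * gaussWeight σ y x) := hπcont.mul hwcont
  have hfpos : ∀ x, 0 < π x * gaussWeight σ y x := fun x =>
    mul_pos (hπpos x) (Real.exp_pos _)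
  have hcontG : Continuous G := hlip.continuous
  have hcontg : Continuous (fun x => ⟪u, x - y⟫/σ^2 - ⟪u, G x⟫) := by
    refine Continuous.sub ?_ ?_
    · exact (continuous_const.inner (continuous_id.sub continuous_const)).div_const _
    · exact continuous_const.inner hcontG
  -- the inner-product identities
  have hfd : ∀ ξ v : EuclideanSpace ℝ (Fin D), fderiv ℝ ℓ ξ v = ⟪G ξ, v⟫ := by
    intro ξ v
    rw [hGdef]
    exact (InnerProductSpace.toDual_symm_apply).symm
  -- derivative along lines
  have hDeriv : ∀ (x : EuclideanSpace ℝ (Fin D)) (s : ℝ),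
      HasDerivAt (fun s : ℝ => π (x - s • u) * gaussWeight σ y (x - s • u))
        ((⟪u, (x - s • u) - y⟫/σ^2 - ⟪u, G (x - s • u)⟫)
          * (π (x - s • u) * gaussWeight σ y (x - s • u))) s := by
    intro x s
    have hm : HasDerivAt (fun s : ℝ => x - s • u) (-u) s := by
      simpa using ((hasDerivAt_id s).smul_const u).const_sub x
    have hA : HasDerivAt (fun s : ℝ => ℓ (x - s • u)) (-⟪u, G (x - s • u)⟫) s := by
      have hfdat := (hdiff (x - s • u)).hasFDerivAt
      have hcomp := hfdat.comp_hasDerivAt s hm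
      have : (fderiv ℝ ℓ (x - s • u)) (-u) = -⟪u, G (x - s • u)⟫ := by
        rw [map_neg, hfd, real_inner_comm]
      rw [← this]
      exact hcomp
    have hnorm : ∀ t : ℝ, ‖y - x + t • u‖^2 = ‖y - x‖^2 + 2*(⟪y - x, u⟫*t) + t^2 := by
      intro t
      rw [norm_add_sq_real, real_inner_smul_right, norm_smul, hu, Real.norm_eq_abs]
      ring_nf
      rw [sq_abs]
    have hB : HasDerivAt (fun s : ℝ => -‖y - x + s • u‖^2/(2*σ^2))
        (-(2*⟪y - x, u⟫ + 2*s)/(2*σ^2)) s := by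
      have hfun : (fun s : ℝ => -‖y - x + s • u‖^2/(2*σ^2))
          = fun s : ℝ => -(‖y - x‖^2 + 2*(⟪y - x, u⟫*s) + s^2)/(2*σ^2) := by
        funext t
        rw [hnorm t]
      rw [hfun]
      have h1 : HasDerivAt (fun s : ℝ => ‖y - x‖^2 + 2*(⟪y - x, u⟫*s) + s^2)
          (2*⟪y - x, u⟫ + 2*s) s := by
        have h2 : HasDerivAt (fun s : ℝ => s^2) (2*s) s := by
          simpa using hasDerivAt_pow 2 s
        have h3 : HasDerivAt (fun s : ℝ => 2*(⟪y - x, u⟫*s)) (2*⟪y - x, u⟫) s := by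
          have := (hasDerivAt_id s).const_mul (2*⟪y - x, u⟫)
          simpa [mul_assoc, mul_comm, mul_left_comm] using this
        have h4 := (h3.add h2).const_add (‖y - x‖^2)
        simpa [add_assoc] using h4
      exact (h1.neg).div_const (2*σ^2)
    have hAB := (hA.add hB).exp
    have hfun2 : (fun s : ℝ => π (x - s • u) * gaussWeight σ y (x - s • u))
        = fun s : ℝ => Real.exp (ℓ (x - s • u) + -‖y - x + s • u‖^2/(2*σ^2)) := by
      funext t
      rw [Real.exp_add, ← hπexp]
      have : y - (x - t • u) = y - x + t • u := by abel
      show π (x - t • u) * gaussWeight σ y (x - t • u) = _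
      rw [gaussWeight, this]
    rw [hfun2]
    convert hAB using 1
    · rfl
    have e1 : ⟪u, (x - s • u) - y⟫ = -⟪y - x, u⟫ - s := by
      have : (x - s • u) - y = -(y - x) - s • u := by abel
      rw [this, inner_sub_right, inner_neg_right, real_inner_smul_right,
        real_inner_self_eq_norm_mul_norm, hu, real_inner_comm]
      ring
    have e2 : π (x - s • u) * gaussWeight σ y (x - s • u)
        = Real.exp (ℓ (x - s • u) + -‖y - x + s • u‖^2/(2*σ^2)) := by
      rw [Real.exp_add, ← hπexp]
      have : y - (x - s • u) = y - x + s • u := by abel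
      show π (x - s • u) * gaussWeight σ y (x - s • u) = _
      rw [gaussWeight, this]
    rw [e1, e2]
    simp only [Pi.add_apply]
    field_simp
    ring
  -- shift bound for g
  have hgshift : ∀ (x : EuclideanSpace ℝ (Fin D)) (h : ℝ), 0 ≤ h →
      (⟪u, (x + h • u) - y⟫/σ^2 - ⟪u, G (x + h • u)⟫)
        - (⟪u, x - y⟫/σ^2 - ⟪u, G x⟫) ≤ (1/σ^2 + M) * h := by
    intro x h hh
    have e1 : ⟪u, (x + h • u) - y⟫ = ⟪u, x - y⟫ + h := by
      have : (x + h • u) - y = (x - y) + h • u := by abel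
      rw [this, inner_add_right, real_inner_smul_right,
        real_inner_self_eq_norm_mul_norm, hu]
      ring
    have e2 : ⟪u, G x⟫ - ⟪u, G (x + h • u)⟫ ≤ M * h := by
      have h1 : ⟪u, G x⟫ - ⟪u, G (x + h • u)⟫ = ⟪u, G x - G (x + h • u)⟫ := by
        rw [inner_sub_right]
      rw [h1]
      have h2 : ⟪u, G x - G (x + h • u)⟫ ≤ ‖G x - G (x + h • u)‖ := by
        have := real_inner_le_norm u (G x - G (x + h • u))
        rwa [hu, one_mul] at this
      have h3 : ‖G x - G (x + h • u)‖ ≤ M * h := by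
        have := hGlip x (x + h • u)
        have e3 : x - (x + h • u) = -(h • u) := by abel
        rw [e3, norm_neg, norm_smul, hu, mul_one, Real.norm_eq_abs, abs_of_nonneg hh] at this
        exact this
      linarith
    rw [e1]
    have : (⟪u, x - y⟫ + h)/σ^2 = ⟪u, x - y⟫/σ^2 + h/σ^2 := by ring
    rw [this]
    have e4 : h/σ^2 = (1/σ^2) * h := by ring
    nlinarith [e2]
  -- bounds
  have hG0 : ∀ x : EuclideanSpace ℝ (Fin D), ‖G x‖ ≤ ‖G 0‖ + M * ‖x‖ := by
    intro x
    have h1 := hGlip x 0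
    rw [sub_zero] at h1
    calc ‖G x‖ ≤ ‖G 0‖ + ‖G x - G 0‖ := by
          simpa using norm_add_le (G 0) (G x - G 0)
      _ ≤ ‖G 0‖ + M * ‖x‖ := by linarith
  have hga : ∀ x, |⟪u, x - y⟫/σ^2 - ⟪u, G x⟫|
      ≤ (‖y‖/σ^2 + ‖G 0‖) + (1/σ^2 + M) * ‖x‖ := by
    intro x
    have h1 : |⟪u, x - y⟫| ≤ ‖x‖ + ‖y‖ := by
      have h2 := abs_real_inner_le_norm u (x - y)
      rw [hu, one_mul] at h2
      exact h2.trans (norm_sub_le x y)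
    have h3 : |⟪u, G x⟫| ≤ ‖G 0‖ + M * ‖x‖ := by
      have h4 := abs_real_inner_le_norm u (G x)
      rw [hu, one_mul] at h4
      exact h4.trans (hG0 x)
    have h5 : |⟪u, x - y⟫/σ^2 - ⟪u, G x⟫| ≤ |⟪u, x - y⟫/σ^2| + |⟪u, G x⟫| := abs_sub _ _
    rw [abs_div, abs_of_pos hσ2] at h5
    have h6 : |⟪u, x - y⟫|/σ^2 ≤ (‖x‖ + ‖y‖)/σ^2 := (div_le_div_iff_of_pos_right hσ2).2 h1
    have h7 : (‖x‖ + ‖y‖)/σ^2 = ‖x‖/σ^2 + ‖y‖/σ^2 := add_div _ _ _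
    have h8 : (1/σ^2 + M) * ‖x‖ = ‖x‖/σ^2 + M * ‖x‖ := by ring
    rw [h7] at h6
    linarith
  -- ball bound for the density
  have hfball : ∀ x ξ, ξ ∈ Metric.closedBall x 1 →
      π ξ * gaussWeight σ y ξ ≤ (C * Real.exp (M + ‖y‖/σ^2))
        * Real.exp ((M + (1+‖y‖)/σ^2) * ‖x‖ - ‖x‖^2/(2*σ^2)) := by
    intro x ξ hξ
    have hd : ‖ξ - x‖ ≤ 1 := mem_closedBall_iff_norm.1 hξ
    have hξ1 : ‖ξ‖ ≤ ‖x‖ + 1 := by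
      have := norm_sub_norm_le ξ x
      linarith
    have hx1 : ‖x‖ - 1 ≤ ‖ξ‖ := by
      have h1 := norm_sub_norm_le x ξ
      have h2 : ‖x - ξ‖ = ‖ξ - x‖ := norm_sub_rev x ξ
      linarith
    have hξ2 : ‖x‖^2 - 2*‖x‖ ≤ ‖ξ‖^2 := by
      rcases le_or_gt ‖x‖ 1 with h | h
      · nlinarith [norm_nonneg ξ, norm_nonneg x]
      · nlinarith [norm_nonneg ξ, norm_nonneg x]
    have hyξ : ‖ξ‖^2 - 2*‖ξ‖*‖y‖ ≤ ‖y - ξ‖^2 := by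
      have h1 : |‖y‖ - ‖ξ‖| ≤ ‖y - ξ‖ := abs_norm_sub_norm_le y ξ
      nlinarith [sq_abs (‖y‖ - ‖ξ‖), abs_nonneg (‖y‖ - ‖ξ‖), norm_nonneg (y - ξ),
        sq_nonneg ‖y‖]
    have hnum : ‖x‖^2 - 2*‖x‖ - 2*(‖x‖+1)*‖y‖ ≤ ‖y - ξ‖^2 := by
      nlinarith [mul_le_mul_of_nonneg_right hξ1 (norm_nonneg y), norm_nonneg y]
    have hexp_ineq : M*‖ξ‖ + -‖y - ξ‖^2/(2*σ^2)
        ≤ (M + ‖y‖/σ^2) + ((M + (1+‖y‖)/σ^2) * ‖x‖ - ‖x‖^2/(2*σ^2)) := by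
      have e1 : -‖y - ξ‖^2/(2*σ^2) ≤ -(‖x‖^2 - 2*‖x‖ - 2*(‖x‖+1)*‖y‖)/(2*σ^2) :=
        (div_le_div_iff_of_pos_right (by positivity)).2 (neg_le_neg hnum)
      have e2 : M*‖ξ‖ ≤ M*‖x‖ + M := by nlinarith
      have e3 : -(‖x‖^2 - 2*‖x‖ - 2*(‖x‖+1)*‖y‖)/(2*σ^2)
          = ‖y‖/σ^2 + ((1+‖y‖)/σ^2)*‖x‖ - ‖x‖^2/(2*σ^2) := by
        field_simp
        ring
      rw [e3] at e1
      have e4 : (M + (1+‖y‖)/σ^2) * ‖x‖ = M*‖x‖ + ((1+‖y‖)/σ^2)*‖x‖ := by ring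
      linarith
    calc π ξ * gaussWeight σ y ξ
        ≤ (C * Real.exp (M*‖ξ‖)) * gaussWeight σ y ξ :=
          mul_le_mul_of_nonneg_right (hCbd ξ) (Real.exp_pos _).le
      _ = C * Real.exp (M*‖ξ‖ + -‖y - ξ‖^2/(2*σ^2)) := by
          rw [gaussWeight, Real.exp_add]
          ring
      _ ≤ C * Real.exp ((M + ‖y‖/σ^2) + ((M + (1+‖y‖)/σ^2) * ‖x‖ - ‖x‖^2/(2*σ^2))) :=
          mul_le_mul_of_nonneg_left (Real.exp_le_exp.2 hexp_ineq) hCpos.le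
      _ = (C * Real.exp (M + ‖y‖/σ^2)) * Real.exp ((M + (1+‖y‖)/σ^2) * ‖x‖ - ‖x‖^2/(2*σ^2)) := by
          rw [Real.exp_add]
          ring
  exact core (fun x => π x * gaussWeight σ y x) (fun x => ⟪u, x - y⟫/σ^2 - ⟪u, G x⟫) u σ M
    hσ hM hu hcontf hfpos hcontg hDeriv hgshift
    (‖y‖/σ^2 + ‖G 0‖) (1/σ^2 + M) (C * Real.exp (M + ‖y‖/σ^2)) (M + (1+‖y‖)/σ^2)
    (by positivity) (by positivity) (by positivity) hga hfball


end PosteriorVarAux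

/-- If `P` has an everywhere positive density `π` with respect to Lebesgue measure such that
`log π` is differentiable with `M`-Lipschitz gradient, then
`Var(X | X + σξ = y) ≽ (σ²/(1 + Mσ²)) I_D`: for all `σ > 0`, `y` and unit vectors `u`,
the directional posterior variance is at least `σ²/(1 + Mσ²)`. -/
theorem posterior_variance_ge_of_lipschitz_score {D : ℕ}
    (P : Measure (EuclideanSpace ℝ (Fin D))) [IsProbabilityMeasure P]
    (π : EuclideanSpace ℝ (Fin D) → ℝ) (M : ℝ) (hM : 0 < M)
    (hπpos : ∀ x, 0 < π x)
    (hP : P = volume.withDensity (fun x => ENNReal.ofReal (π x)))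
    (hdiff : Differentiable ℝ (fun x : EuclideanSpace ℝ (Fin D) => Real.log (π x)))
    (hlip : LipschitzWith (Real.toNNReal M)
      (gradient (fun x : EuclideanSpace ℝ (Fin D) => Real.log (π x)))) :
    ∀ σ > 0, ∀ y u : EuclideanSpace ℝ (Fin D), ‖u‖ = 1 →
      σ ^ 2 / (1 + M * σ ^ 2) ≤ dirVar P σ y u := by
  intro σ hσ y u hu
  have hπcont : Continuous π := by
    have : π = fun x => Real.exp (Real.log (π x)) :=
      funext fun x => (Real.exp_log (hπpos x)).symm
    rw [this]
    exact Real.continuous_exp.comp hdiff.continuous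
  have hle : ∫⁻ x, ENNReal.ofReal (π x) ≤ 1 := by
    have h1 : P Set.univ = 1 := measure_univ
    rw [hP, withDensity_apply _ MeasurableSet.univ, setLIntegral_univ] at h1
    exact h1.le
  have hC := growth_bound π M hM hπpos hdiff hlip hle
  have hmeas : Measurable (fun x => (π x).toNNReal) := hπcont.measurable.real_toNNReal
  have key : ∀ φ : EuclideanSpace ℝ (Fin D) → ℝ, ∫ x, φ x ∂P = ∫ x, π x * φ x := by
    intro φ
    rw [hP]
    rw [show (fun x => ENNReal.ofReal (π x)) = (fun x => ((π x).toNNReal : ℝ≥0∞)) from rfl]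
    rw [integral_withDensity_eq_integral_smul hmeas φ]
    congr 1
    funext x
    rw [NNReal.smul_def, smul_eq_mul, Real.coe_toNNReal _ (hπpos x).le]
  unfold dirVar
  rw [key (fun x => gaussWeight σ y x * ⟪u, x⟫ ^ 2), key (fun x => gaussWeight σ y x),
    key (fun x => gaussWeight σ y x * ⟪u, x⟫)]
  have e1 : ∫ x, π x * (gaussWeight σ y x * ⟪u, x⟫ ^ 2)
      = ∫ x, ⟪u, x⟫^2 * (π x * gaussWeight σ y x) := by
    congr 1
    funext x
    ring
  have e2 : ∫ x, π x * (gaussWeight σ y x * ⟪u, x⟫)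
      = ∫ x, ⟪u, x⟫ * (π x * gaussWeight σ y x) := by
    congr 1
    funext x
    ring
  rw [e1, e2]
  exact main_ineq π M σ y u hM hσ hu hπpos hdiff hlip hC
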